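/- arXiv:1202.2463 — 2 statements merged into one kernel-verified Lean document; each statement's English description precedes it below -/
import Mathlib

section
/- If two ratios (N_1:D_1) and (N_2:D_2) of formal power series in K[[x]] are equivalent (i.e., N_1 D_2 - N_2 D_1 = 0), and (N_1:D_1) is nontrivial and K-algebraic along a linear subspace E, and (N_2:D_2) is nontrivial (some finite jet along E nonzero), then (N_2:D_2) is also K-algebraic along E. -/
/-- Algebraic power series over `K`. -/
def IsAlgPS {K : Type*} [Field K] {r : ℕ} (T : MvPowerSeries (Fin r) K) : Prop :=
  ∃ m : ℕ, 0 < m ∧ ∃ P : ℕ → MvPolynomial (Fin r) K, P m ≠ 0 ∧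
    ∑ j ∈ Finset.range (m + 1), (P j : MvPowerSeries (Fin r) K) * T ^ j = 0

/-- Degree of a multi-exponent in the block `S` of variables cutting out the coordinate
subspace `E = {x_i = 0 : i ∈ S}`. -/
def degS {r : ℕ} (S : Finset (Fin r)) (α : Fin r →₀ ℕ) : ℕ := ∑ i ∈ S, α i

/-- `(j^q T)|_E = 0` for the coordinate subspace `E` cut out by the variables in `S`. -/
def jVanish {K : Type*} [Field K] {r : ℕ} (S : Finset (Fin r)) (q : ℕ)
    (T : MvPowerSeries (Fin r) K) : Prop :=
  ∀ α : Fin r →₀ ℕ, degS S α ≤ q → MvPowerSeries.coeff α T = 0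

/-- `(j^ℓ (N, D))|_E ≠ 0`. -/
def jNonzero {K : Type*} [Field K] {r : ℕ} (S : Finset (Fin r)) (ℓ : ℕ)
    (N D : MvPowerSeries (Fin r) K) : Prop :=
  ∃ α : Fin r →₀ ℕ, degS S α ≤ ℓ ∧
    (MvPowerSeries.coeff α N ≠ 0 ∨ MvPowerSeries.coeff α D ≠ 0)

/-- Two ratios are `q`-similar along `E` if `(j^q (N D' - N' D))|_E = 0`. -/
def qSimilar {K : Type*} [Field K] {r : ℕ} (S : Finset (Fin r)) (q : ℕ)
    (N D N' D' : MvPowerSeries (Fin r) K) : Prop :=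
  jVanish S q (N * D' - N' * D)

/-- The ratio `(N : D)` is `K`-algebraic along `E`: there is `ℓ` and, for every `q`,
algebraic power series `N_q, D_q` such that `(N : D)` and `(N_q : D_q)` are `q`-similar
along `E` and `(j^ℓ (N_q, D_q))|_E ≠ 0`. -/
def KAlgAlong {K : Type*} [Field K] {r : ℕ} (S : Finset (Fin r))
    (N D : MvPowerSeries (Fin r) K) : Prop :=
  ∃ ℓ : ℕ, ∀ q : ℕ, ∃ Nq Dq : MvPowerSeries (Fin r) K,
    IsAlgPS Nq ∧ IsAlgPS Dq ∧ qSimilar S q N D Nq Dq ∧ jNonzero S ℓ Nq Dq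

lemma degS_add {r : ℕ} (S : Finset (Fin r)) (α β : Fin r →₀ ℕ) :
    degS S (α + β) = degS S α + degS S β := by
  simp [degS, Finsupp.add_apply, Finset.sum_add_distrib]

noncomputable def comp {K : Type*} [Field K] {r : ℕ} (S : Finset (Fin r)) (d : ℕ)
    (T : MvPowerSeries (Fin r) K) : MvPowerSeries (Fin r) K :=
  fun α => if degS S α = d then MvPowerSeries.coeff α T else 0

lemma coeff_comp {K : Type*} [Field K] {r : ℕ} (S : Finset (Fin r)) (d : ℕ)
    (T : MvPowerSeries (Fin r) K) (α : Fin r →₀ ℕ) :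
    MvPowerSeries.coeff α (comp S d T) =
      if degS S α = d then MvPowerSeries.coeff α T else 0 := rfl

lemma comp_mul {K : Type*} [Field K] {r : ℕ} (S : Finset (Fin r)) (e : ℕ)
    (T U : MvPowerSeries (Fin r) K) :
    comp S e (T * U) = ∑ p ∈ Finset.HasAntidiagonal.antidiagonal e, comp S p.1 T * comp S p.2 U := by
  ext α
  rw [map_sum, coeff_comp, MvPowerSeries.coeff_mul]
  have h1 : ∀ p ∈ Finset.HasAntidiagonal.antidiagonal e,
      MvPowerSeries.coeff α (comp S p.1 T * comp S p.2 U)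
      = ∑ b ∈ Finset.HasAntidiagonal.antidiagonal α,
          if (degS S b.1, degS S b.2) = p then
            MvPowerSeries.coeff b.1 T * MvPowerSeries.coeff b.2 U else 0 := by
    intro p _
    rw [MvPowerSeries.coeff_mul]
    refine Finset.sum_congr rfl fun b _ => ?_
    rw [coeff_comp, coeff_comp]
    rcases p with ⟨p1, p2⟩
    by_cases hb1 : degS S b.1 = p1 <;> by_cases hb2 : degS S b.2 = p2 <;>
      simp [hb1, hb2, Prod.ext_iff]
  rw [Finset.sum_congr rfl h1, Finset.sum_comm]
  have h2 : ∀ b ∈ Finset.HasAntidiagonal.antidiagonal α,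
      (∑ p ∈ Finset.HasAntidiagonal.antidiagonal e, if (degS S b.1, degS S b.2) = p then
        MvPowerSeries.coeff b.1 T * MvPowerSeries.coeff b.2 U else 0)
      = if degS S α = e then MvPowerSeries.coeff b.1 T * MvPowerSeries.coeff b.2 U else 0 := by
    intro b hb
    rw [Finset.sum_ite_eq (Finset.HasAntidiagonal.antidiagonal e) (degS S b.1, degS S b.2)]
    have hb' : b.1 + b.2 = α := Finset.HasAntidiagonal.mem_antidiagonal.mp hb
    have hd : degS S b.1 + degS S b.2 = degS S α := by rw [← hb', degS_add]
    simp only [Finset.HasAntidiagonal.mem_antidiagonal, hd]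
  rw [Finset.sum_congr rfl h2]
  split_ifs <;> simp

lemma comp_eq_zero_of_jVanish {K : Type*} [Field K] {r : ℕ} {S : Finset (Fin r)} {q d : ℕ}
    {T : MvPowerSeries (Fin r) K} (h : jVanish S q T) (hd : d ≤ q) : comp S d T = 0 := by
  ext α
  rw [coeff_comp]
  split_ifs with hα
  · exact h α (hα ▸ hd)
  · simp

lemma eq_zero_of_comp {K : Type*} [Field K] {r : ℕ} {S : Finset (Fin r)}
    {T : MvPowerSeries (Fin r) K} (h : ∀ d, comp S d T = 0) : T = 0 := by
  ext α
  have := congrArg (MvPowerSeries.coeff α) (h (degS S α))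
  rw [coeff_comp, if_pos rfl] at this
  simpa using this

lemma jVanish_mul_right {K : Type*} [Field K] {r : ℕ} {S : Finset (Fin r)} {q : ℕ}
    {T : MvPowerSeries (Fin r) K} (h : jVanish S q T) (U : MvPowerSeries (Fin r) K) :
    jVanish S q (T * U) := by
  intro α hα
  rw [MvPowerSeries.coeff_mul]
  refine Finset.sum_eq_zero fun b hb => ?_
  have hb' : b.1 + b.2 = α := Finset.HasAntidiagonal.mem_antidiagonal.mp hb
  have : degS S b.1 ≤ degS S α := by rw [← hb', degS_add]; omega
  rw [h b.1 (le_trans this hα), zero_mul]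

lemma jVanish_cancel {K : Type*} [Field K] {r : ℕ} {S : Finset (Fin r)} {q c : ℕ}
    {D T : MvPowerSeries (Fin r) K} (hc : comp S c D ≠ 0) (hmin : ∀ a < c, comp S a D = 0)
    (h : jVanish S (q + c) (D * T)) : jVanish S q T := by
  have key : ∀ d, d ≤ q → comp S d T = 0 := by
    intro d
    induction d using Nat.strong_induction_on with
    | _ d IH =>
      intro hd
      have h1 : comp S (c + d) (D * T) = comp S c D * comp S d T := by
        rw [comp_mul]
        rw [Finset.sum_eq_single (c, d)]
        · intro p hp hne
          have hp' : p.1 + p.2 = c + d := Finset.HasAntidiagonal.mem_antidiagonal.mp hp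
          rcases lt_or_ge p.1 c with hlt | hge
          · rw [hmin p.1 hlt, zero_mul]
          · have : p.2 < d := by
              rcases lt_or_ge p.2 d with h' | h'
              · exact h'
              · exfalso; apply hne
                have : p.1 = c := by omega
                have : p.2 = d := by omega
                exact Prod.ext (by omega) (by omega)
            rw [IH p.2 this (by omega), mul_zero]
        · intro hmem
          exact absurd (Finset.HasAntidiagonal.mem_antidiagonal.mpr (rfl : (c,d).1 + (c,d).2 = c + d)) hmem
      have h2 : comp S (c + d) (D * T) = 0 :=
        comp_eq_zero_of_jVanish h (by omega)
      rw [h2] at h1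
      rcases mul_eq_zero.mp h1.symm with h' | h'
      · exact absurd h' hc
      · exact h'
  intro α hα
  have := congrArg (MvPowerSeries.coeff α) (key (degS S α) hα)
  rw [coeff_comp, if_pos rfl] at this
  simpa using this

lemma isAlgPS_one {K : Type*} [Field K] {r : ℕ} : IsAlgPS (1 : MvPowerSeries (Fin r) K) := by
  refine ⟨1, one_pos, fun j => if j = 1 then 1 else -1, by simp, ?_⟩
  have hneg : ((-1 : MvPolynomial (Fin r) K) : MvPowerSeries (Fin r) K) = -1 := by
    ext n; simp [MvPolynomial.coeff_one, MvPowerSeries.coeff_one, eq_comm]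
  simp [Finset.sum_range_succ, hneg]

lemma isAlgPS_zero {K : Type*} [Field K] {r : ℕ} : IsAlgPS (0 : MvPowerSeries (Fin r) K) := by
  refine ⟨1, one_pos, fun j => if j = 1 then 1 else 0, by simp, ?_⟩
  simp [Finset.sum_range_succ]

/-- If two ratios are equivalent, one of them nontrivial and `K`-algebraic along `E`,
and the other nontrivial, then the other is also `K`-algebraic along `E` (Remark 2.5). -/
theorem kAlgebraic_of_equivalent {K : Type*} [Field K] {r : ℕ} (S : Finset (Fin r))
    (N₁ D₁ N₂ D₂ : MvPowerSeries (Fin r) K)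
    (hequiv : N₁ * D₂ - N₂ * D₁ = 0)
    (h1nz : ∃ ℓ, jNonzero S ℓ N₁ D₁)
    (h1alg : KAlgAlong S N₁ D₁)
    (h2nz : ∃ ℓ, jNonzero S ℓ N₂ D₂) :
    KAlgAlong S N₂ D₂ := by
  classical
  obtain ⟨ℓ, hq⟩ := h1alg
  by_cases hD1 : D₁ = 0
  · obtain ⟨ℓ₀, α₀, hα₀, hcoef⟩ := h1nz
    have hN1 : N₁ ≠ 0 := by
      intro h0; rcases hcoef with h | h <;> simp [h0, hD1] at h
    have hD2 : D₂ = 0 := by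
      have hz : N₁ * D₂ = 0 := by rw [hD1] at hequiv; simpa using hequiv
      rcases mul_eq_zero.mp hz with h | h
      · exact absurd h hN1
      · exact h
    refine ⟨0, fun q => ⟨1, 0, isAlgPS_one, isAlgPS_zero, ?_, ?_⟩⟩
    · intro α hα; simp [hD2]
    · exact ⟨0, by simp [degS], Or.inl (by simp)⟩
  · have hex : ∃ c, comp S c D₁ ≠ 0 := by
      by_contra h
      push_neg at h
      exact hD1 (eq_zero_of_comp h)
    have hc : comp S (Nat.find hex) D₁ ≠ 0 := Nat.find_spec hex
    have hmin : ∀ a < Nat.find hex, comp S a D₁ = 0 := fun a ha =>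
      not_not.mp (Nat.find_min hex ha)
    refine ⟨ℓ, fun q => ?_⟩
    obtain ⟨Nq, Dq, hNalg, hDalg, hsim, hnz⟩ := hq (q + Nat.find hex)
    refine ⟨Nq, Dq, hNalg, hDalg, ?_, hnz⟩
    have h1 : jVanish S (q + Nat.find hex) ((N₁ * Dq - Nq * D₁) * D₂) :=
      jVanish_mul_right hsim D₂
    have h2 : (N₁ * Dq - Nq * D₁) * D₂ = D₁ * (N₂ * Dq - Nq * D₂) := by
      linear_combination Dq * hequiv
    rw [h2] at h1
    exact jVanish_cancel hc hmin h1
end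

section
/- With the iterated Segre mappings v_j as above and the inversion map I(t^{[j]}, s, u) defined by I = (t^{[j]}, U_j(t^j, t^{j-1}, ..., t^1, s, u)) for j odd (with the order of the t-variables reversed), and with conjugated U_j for j even, the following identities hold: v_j(I(t^{[j]}, s, u)) = (t^j, s, u) and I(t^{[j-1]}, v_j(t^{[j]}, s, u)) = (t^{[j]}, s, u). -/
/-- Points of `ℂ^k`. -/
abbrev Cv (k : ℕ) := Fin k → ℂ

/-- The map with conjugated coefficients. -/
noncomputable def conjTheta {n d : ℕ} (Θ : Cv n → Cv n → Cv d → Cv d) :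
    Cv n → Cv n → Cv d → Cv d :=
  fun z χ σ => star (Θ (star z) (star χ) (star σ))

/-- The iterated Segre mappings `v_j(t^{[j]}, s, u) = (t^j, U_j(t^{[j]}, s, u))`. -/
noncomputable def segre {n d : ℕ} (Θ : Cv n → Cv n → Cv d → Cv d) :
    (j : ℕ) → (Fin j → Cv n) → Cv d → Cv n × Cv d
  | 0, _, η => (0, η)
  | (j + 1), t, η =>
      (t (Fin.last j),
        Θ (t (Fin.last j))
          (star ((segre Θ j (fun i => star (t i.castSucc)) (star η)).1))
          (star ((segre Θ j (fun i => star (t i.castSucc)) (star η)).2)))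

/-- The map `U_j`, the second component of `v_j`. -/
noncomputable def Umap {n d : ℕ} (Θ : Cv n → Cv n → Cv d → Cv d) (j : ℕ)
    (t : Fin j → Cv n) (η : Cv d) : Cv d :=
  (segre Θ j t η).2

/-- The inversion map `I(t^{[j]}, s, u) = (t^{[j]}, U_j(t^j, …, t^1, s, u))` for `j` odd,
with conjugated `U_j` for `j` even. -/
noncomputable def Imap {n d : ℕ} (Θ : Cv n → Cv n → Cv d → Cv d) (j : ℕ)
    (t : Fin j → Cv n) (η : Cv d) : (Fin j → Cv n) × Cv d :=
  (t, if j % 2 = 1 then Umap Θ j (fun i => t (Fin.rev i)) η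
      else star (Umap Θ j (fun i => star (t (Fin.rev i))) (star η)))

namespace SegreAux

variable {n d : ℕ}

lemma conjTheta_conjTheta (Θ : Cv n → Cv n → Cv d → Cv d) :
    conjTheta (conjTheta Θ) = Θ := by
  funext z χ σ; simp [conjTheta]

lemma conj_hn1 {Θ : Cv n → Cv n → Cv d → Cv d} (hn1 : ∀ z σ, Θ z 0 σ = σ) :
    ∀ z σ, conjTheta Θ z 0 σ = σ := by
  intro z σ; simp [conjTheta, hn1]

lemma conj_hreal' {Θ : Cv n → Cv n → Cv d → Cv d}
    (hreal : ∀ z χ η, Θ z χ (conjTheta Θ χ z η) = η) :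
    ∀ z χ η, conjTheta Θ z χ (Θ χ z η) = η := by
  intro z χ η
  have h := hreal (star z) (star χ) (star η)
  simp only [conjTheta, star_star] at h ⊢
  rw [h, star_star]

lemma conj_hreal {Θ : Cv n → Cv n → Cv d → Cv d}
    (hreal : ∀ z χ η, Θ z χ (conjTheta Θ χ z η) = η) :
    ∀ z χ η, conjTheta Θ z χ (conjTheta (conjTheta Θ) χ z η) = η := by
  simpa [conjTheta_conjTheta] using conj_hreal' hreal

lemma segre_conj (Θ : Cv n → Cv n → Cv d → Cv d) (j : ℕ) :
    ∀ (t : Fin j → Cv n) (η : Cv d),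
    segre (conjTheta Θ) j t η =
      (star (segre Θ j (fun i => star (t i)) (star η)).1,
       star (segre Θ j (fun i => star (t i)) (star η)).2) := by
  induction j with
  | zero => intro t η; simp [segre]
  | succ j ih => intro t η; simp [segre, conjTheta, ih, star_star]

lemma Umap_conj (Θ : Cv n → Cv n → Cv d → Cv d) (j : ℕ) (t : Fin j → Cv n) (η : Cv d) :
    Umap (conjTheta Θ) j t η = star (Umap Θ j (fun i => star (t i)) (star η)) := by
  simp [Umap, segre_conj]

lemma Umap_one {Θ : Cv n → Cv n → Cv d → Cv d} (hn1 : ∀ z σ, Θ z 0 σ = σ)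
    (t : Fin 1 → Cv n) (η : Cv d) : Umap Θ 1 t η = η := by
  simp [Umap, segre, hn1]

lemma Umap_succ (Θ : Cv n → Cv n → Cv d → Cv d) (j : ℕ) (t : Fin (j + 2) → Cv n) (η : Cv d) :
    Umap Θ (j + 2) t η = Θ (t (Fin.last (j + 1))) (t (Fin.last j).castSucc)
      (Umap (conjTheta Θ) (j + 1) (fun i => t i.castSucc) η) := by
  rw [Umap_conj]
  simp [Umap, segre]

lemma Umap_prepend (j : ℕ) : ∀ (Θ : Cv n → Cv n → Cv d → Cv d),
    (∀ z σ, Θ z 0 σ = σ) → ∀ (t : Fin (j + 2) → Cv n) (η : Cv d),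
    Umap Θ (j + 2) t η = Umap Θ (j + 1) (fun i => t i.succ)
      ((if (j + 1) % 2 = 1 then Θ else conjTheta Θ) (t ⟨1, by omega⟩) (t ⟨0, by omega⟩) η) := by
  induction j with
  | zero =>
    intro Θ hn1 t η
    rw [Umap_succ, Umap_one (conj_hn1 hn1), Umap_one hn1]
    rfl
  | succ j ih =>
    intro Θ hn1 t η
    rw [Umap_succ, ih (conjTheta Θ) (conj_hn1 hn1), Umap_succ, conjTheta_conjTheta]
    rcases Nat.mod_two_eq_zero_or_one j with hj | hj
    · have h1 : (j + 1) % 2 = 1 := by omega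
      have h2 : (j + 2) % 2 = 0 := by omega
      simp only [h1, h2, if_true, if_pos, if_neg, reduceIte]
      rfl
    · have h1 : (j + 1) % 2 = 0 := by omega
      have h2 : (j + 2) % 2 = 1 := by omega
      simp only [h1, h2]
      norm_num
      rfl

lemma key (m : ℕ) : ∀ (Θ : Cv n → Cv n → Cv d → Cv d),
    (∀ z σ, Θ z 0 σ = σ) →
    (∀ z χ η, Θ z χ (conjTheta Θ χ z η) = η) →
    ∀ (t : Fin m → Cv n) (η : Cv d),
    Umap (if m % 2 = 1 then Θ else conjTheta Θ) m (fun i => t i.rev) (Umap Θ m t η) = η := by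
  induction m with
  | zero => intro Θ hn1 hreal t η; rfl
  | succ m ih =>
    cases m with
    | zero =>
      intro Θ hn1 hreal t η
      simp only [Nat.mod_self, reduceIte, Nat.one_mod]
      rw [Umap_one hn1, Umap_one hn1]
    | succ k =>
      intro Θ hn1 hreal t η
      rw [Umap_succ Θ k t η]
      have e0 : Fin.rev (⟨0, by omega⟩ : Fin (k + 2)) = Fin.last (k + 1) := by
        ext; simp [Fin.rev, Fin.last]; try omega
      have e1 : Fin.rev (⟨1, by omega⟩ : Fin (k + 2)) = (Fin.last k).castSucc := by
        ext; simp [Fin.rev, Fin.last]; try omega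
      have ef : (fun i : Fin (k + 1) => t (Fin.rev i.succ))
          = (fun i : Fin (k + 1) => (fun i : Fin (k + 1) => t i.castSucc) i.rev) := by
        funext i; ext; simp [Fin.rev]; try omega
      have ihc := ih (conjTheta Θ) (conj_hn1 hn1) (conj_hreal hreal) (fun i => t i.castSucc) η
      rcases Nat.mod_two_eq_zero_or_one k with hk | hk
      · have h2 : (k + 1 + 1) % 2 = 0 := by omega
        have h1 : (k + 1) % 2 = 1 := by omega
        rw [if_neg (by omega : ¬ (k + 1 + 1) % 2 = 1)]
        rw [Umap_prepend k (conjTheta Θ) (conj_hn1 hn1)]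
        rw [if_pos h1]
        rw [e0, e1, conj_hreal' hreal, ef]
        simpa [h1, conjTheta_conjTheta] using ihc
      · have h2 : (k + 1 + 1) % 2 = 1 := by omega
        have h1 : (k + 1) % 2 = 0 := by omega
        rw [if_pos h2]
        rw [Umap_prepend k Θ hn1]
        rw [if_neg (by omega : ¬ (k + 1) % 2 = 1)]
        rw [e0, e1, conj_hreal' hreal, ef]
        simpa [h1, conjTheta_conjTheta] using ihc

end SegreAux

open SegreAux in
/-- The identities `v_j(I(t^{[j]}, s, u)) = (t^j, s, u)` and
`I(t^{[j-1]}, v_j(t^{[j]}, s, u)) = (t^{[j]}, s, u)`. -/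
theorem segre_inversion {n d : ℕ} (Θ : Cv n → Cv n → Cv d → Cv d)
    (hn1 : ∀ z σ, Θ z 0 σ = σ) (hn2 : ∀ χ σ, Θ 0 χ σ = σ)
    (hreal : ∀ z χ η, Θ z χ (conjTheta Θ χ z η) = η) :
    (∀ (j : ℕ) (t : Fin (j + 1) → Cv n) (η : Cv d),
      segre Θ (j + 1) t ((Imap Θ (j + 1) t η).2) = (t (Fin.last j), η)) ∧
    (∀ (j : ℕ) (t : Fin (j + 1) → Cv n) (η : Cv d),
      Imap Θ (j + 1) t ((segre Θ (j + 1) t η).2) = (t, η)) := by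
  constructor
  · intro j t η
    refine Prod.ext rfl ?_
    show Umap Θ (j + 1) t ((Imap Θ (j + 1) t η).2) = η
    rcases Nat.mod_two_eq_zero_or_one j with hj | hj
    · have hI : (Imap Θ (j + 1) t η).2 = Umap Θ (j + 1) (fun i => t i.rev) η := by
        show (if (j + 1) % 2 = 1 then _ else _) = _
        rw [if_pos (by omega : (j + 1) % 2 = 1)]
      rw [hI]
      have h := key (j + 1) Θ hn1 hreal (fun i => t i.rev) η
      rw [if_pos (by omega : (j + 1) % 2 = 1)] at h
      simpa [Fin.rev_rev] using h
    · have hI : (Imap Θ (j + 1) t η).2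
          = Umap (conjTheta Θ) (j + 1) (fun i => t i.rev) η := by
        show (if (j + 1) % 2 = 1 then _ else _) = _
        rw [if_neg (by omega : ¬ (j + 1) % 2 = 1), ← Umap_conj]
      rw [hI]
      have h := key (j + 1) (conjTheta Θ) (conj_hn1 hn1) (conj_hreal hreal)
        (fun i => t i.rev) η
      rw [if_neg (by omega : ¬ (j + 1) % 2 = 1), conjTheta_conjTheta] at h
      simpa [Fin.rev_rev] using h
  · intro j t η
    refine Prod.ext rfl ?_
    show (if (j + 1) % 2 = 1 then _ else _) = η
    rcases Nat.mod_two_eq_zero_or_one j with hj | hj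
    · rw [if_pos (by omega : (j + 1) % 2 = 1)]
      have h := key (j + 1) Θ hn1 hreal t η
      rwa [if_pos (by omega : (j + 1) % 2 = 1)] at h
    · rw [if_neg (by omega : ¬ (j + 1) % 2 = 1), ← Umap_conj]
      have h := key (j + 1) Θ hn1 hreal t η
      rwa [if_neg (by omega : ¬ (j + 1) % 2 = 1)] at h
end
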